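/- With notation as above, define the combinatorial pairing Φ(F_i, F_j) = (−1)^{dim σ_{ij}} · (number of vertices of σ_{ij}) on the free vector space V spanned by the top-dimensional bounded regions F_1, …, F_r of a generic arrangement in ℝ^m. Then Φ(F_i, F_j) = (−1)^m ⟨Ψ(F_i), Ψ(F_j)⟩, and consequently, if Ψ is injective on V, the pairing Φ is positive definite when m is even and negative definite when m is odd. -/

import Mathlib

open scoped RealInnerProductSpace

/-- The (relatively open) face of the arrangement with sign vector `σ`. -/
def arrFace {ι : Type*} {m : ℕ} (a : ι → EuclideanSpace ℝ (Fin m)) (b : ι → ℝ)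
    (σ : ι → SignType) : Set (EuclideanSpace ℝ (Fin m)) :=
  {x | ∀ i, SignType.sign (⟪a i, x⟫ - b i) = σ i}

/-- A top-dimensional bounded region of the arrangement: a nowhere-zero sign vector with
non-empty bounded face. -/
def isBoundedRegion {ι : Type*} {m : ℕ} (a : ι → EuclideanSpace ℝ (Fin m)) (b : ι → ℝ)
    (φ : ι → SignType) : Prop :=
  (∀ i, φ i ≠ 0) ∧ (arrFace a b φ).Nonempty ∧ Bornology.IsBounded (arrFace a b φ)

open Classical in
/-- The nerve chain `Ψ(F) ∈ C_{m-1}(N; ℝ)` of the region with sign vector `φ`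
(cf. STATEMENT 11). -/
noncomputable def PsiChain {s : ℕ} {m : ℕ} (a : Fin s → EuclideanSpace ℝ (Fin m))
    (b : Fin s → ℝ) (φ : Fin s → SignType) : Finset (Fin s) → ℝ := fun S =>
  if hS : S.card = m then
    if ∃ x ∈ closure (arrFace a b φ), {i | ⟪a i, x⟫ = b i} = (↑S : Set (Fin s)) then
      ((SignType.sign (Matrix.det
        (Matrix.of fun p q : Fin m => ((φ (S.orderIsoOfFin hS p) : ℝ) •
          a (S.orderIsoOfFin hS p)) q)) : ℤ) : ℝ)
    else 0
  else 0

/-- The combinatorial pairing `Φ(F_i, F_j) = (-1)^{dim σ_{ij}} ⋅ #vertices(σ_{ij})`, where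
`σ_{ij} = cl F_i ∩ cl F_j`. -/
noncomputable def PhiPair {s : ℕ} {m : ℕ} (a : Fin s → EuclideanSpace ℝ (Fin m))
    (b : Fin s → ℝ) (φ₁ φ₂ : Fin s → SignType) : ℝ :=
  (-1 : ℝ) ^ (Module.finrank ℝ
      (affineSpan ℝ (closure (arrFace a b φ₁) ∩ closure (arrFace a b φ₂))).direction) *
    (({x ∈ closure (arrFace a b φ₁) ∩ closure (arrFace a b φ₂) |
        ({i | ⟪a i, x⟫ = b i} : Set (Fin s)).ncard = m}).ncard : ℝ)

section StmtTwelveAux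
variable {s m : ℕ} (a : Fin s → EuclideanSpace ℝ (Fin m)) (b : Fin s → ℝ)

lemma sign_ne_zero_pos {t : ℝ} {u : SignType} (hu : u ≠ 0) (h : SignType.sign t = u) :
    0 < (u : ℝ) * t := by
  rcases u with _ | _ | _
  · exact absurd rfl hu
  · change SignType.sign t = -1 at h
    rw [sign_eq_neg_one_iff] at h
    simpa using by nlinarith
  · change SignType.sign t = 1 at h
    rw [sign_eq_one_iff] at h
    simpa using h

lemma sign_of_pos_mul {t : ℝ} {u : SignType} (hu : u ≠ 0) (h : 0 < (u : ℝ) * t) :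
    SignType.sign t = u := by
  rcases u with _ | _ | _
  · exact absurd rfl hu
  · show SignType.sign t = -1
    rw [sign_eq_neg_one_iff]
    have : (↑SignType.neg : ℝ) = -1 := rfl
    nlinarith [h]
  · show SignType.sign t = 1
    rw [sign_eq_one_iff]
    have : (↑SignType.pos : ℝ) = 1 := rfl
    nlinarith [h]

lemma closure_arrFace (φ : Fin s → SignType) (hφ : ∀ i, φ i ≠ 0)
    (hne : (arrFace a b φ).Nonempty) :
    closure (arrFace a b φ) = {x | ∀ i, 0 ≤ (φ i : ℝ) * (⟪a i, x⟫ - b i)} := by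
  obtain ⟨y, hy⟩ := hne
  apply Set.Subset.antisymm
  · apply closure_minimal
    · intro x hx i
      exact (sign_ne_zero_pos (hφ i) (hx i)).le
    · have : {x : EuclideanSpace ℝ (Fin m) | ∀ i, 0 ≤ (φ i : ℝ) * (⟪a i, x⟫ - b i)} =
          ⋂ i, {x | 0 ≤ (φ i : ℝ) * (⟪a i, x⟫ - b i)} := by
        ext x; simp [Set.mem_iInter]
      rw [this]
      refine isClosed_iInter fun i => ?_
      have hc : Continuous fun x : EuclideanSpace ℝ (Fin m) =>
          (φ i : ℝ) * (⟪a i, x⟫ - b i) :=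
        (continuous_const.mul (((continuous_const.inner continuous_id)).sub continuous_const))
      exact isClosed_le continuous_const hc
  · intro x hx
    have key : ∀ t : ℝ, 0 < t → t ≤ 1 → x + t • (y - x) ∈ arrFace a b φ := by
      intro t ht ht1 i
      apply sign_of_pos_mul (hφ i)
      have h1 : ⟪a i, x + t • (y - x)⟫ - b i
          = (1 - t) * (⟪a i, x⟫ - b i) + t * (⟪a i, y⟫ - b i) := by
        rw [inner_add_right, inner_smul_right, inner_sub_right]; ring
      rw [h1]
      have h2 := hx i
      have h3 := sign_ne_zero_pos (hφ i) (hy i)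
      nlinarith
    rw [mem_closure_iff_seq_limit]
    refine ⟨fun n => x + (1 / (n + 1) : ℝ) • (y - x), fun n => key _ (by positivity)
      (by rw [div_le_one (by positivity)]; linarith [Nat.cast_nonneg (α := ℝ) n]), ?_⟩
    have : Filter.Tendsto (fun n : ℕ => (1 / (n + 1) : ℝ)) Filter.atTop (nhds 0) :=
      tendsto_one_div_add_atTop_nhds_zero_nat
    have h := (this.smul_const (y - x)).const_add x
    simpa using h


lemma signtype_neg_of_ne {u v : SignType} (hu : u ≠ 0) (hv : v ≠ 0) (huv : u ≠ v) :
    (v : ℝ) = -(u : ℝ) := by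
  rcases u with _|_|_ <;> rcases v with _|_|_ <;> simp_all

lemma signtype_coe_ne_zero {u : SignType} (hu : u ≠ 0) : (u : ℝ) ≠ 0 := by
  rcases u with _|_|_ <;> simp_all

lemma signtype_abs_coe_one {u : SignType} (hu : u ≠ 0) : |(u : ℝ)| = 1 := by
  rcases u with _|_|_ <;> simp_all

lemma mem_sigma_iff (φ₁ φ₂ : Fin s → SignType) (h1 : isBoundedRegion a b φ₁)
    (h2 : isBoundedRegion a b φ₂) (x : EuclideanSpace ℝ (Fin m)) :
    x ∈ closure (arrFace a b φ₁) ∩ closure (arrFace a b φ₂) ↔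
      (∀ i, φ₁ i ≠ φ₂ i → ⟪a i, x⟫ = b i) ∧
      (∀ i, 0 ≤ (φ₁ i : ℝ) * (⟪a i, x⟫ - b i)) := by
  rw [Set.mem_inter_iff, closure_arrFace a b φ₁ h1.1 h1.2.1,
    closure_arrFace a b φ₂ h2.1 h2.2.1]
  constructor
  · rintro ⟨hx1, hx2⟩
    refine ⟨fun i hi => ?_, hx1⟩
    have hne := signtype_neg_of_ne (h1.1 i) (h2.1 i) hi
    have g1 := hx1 i
    have g2 := hx2 i
    rw [hne] at g2
    have hz : (φ₁ i : ℝ) * (⟪a i, x⟫ - b i) = 0 := le_antisymm (by linarith) g1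
    have hne0 : (φ₁ i : ℝ) ≠ 0 := signtype_coe_ne_zero (h1.1 i)
    have := (mul_eq_zero.mp hz).resolve_left hne0
    linarith
  · rintro ⟨hD, hx1⟩
    refine ⟨hx1, fun i => ?_⟩
    by_cases hi : φ₁ i = φ₂ i
    · rw [← hi]; exact hx1 i
    · rw [hD i hi]; simp

/-- At a point of the closure of a bounded region where `m` hyperplanes pass,
the normals of those hyperplanes span: any vector orthogonal to all of them is zero. -/
lemma span_at_vertex (φ : Fin s → SignType) (hb : isBoundedRegion a b φ)
    (hgeneric : ∀ x : EuclideanSpace ℝ (Fin m),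
      ({i | ⟪a i, x⟫ = b i} : Set (Fin s)).ncard ≤ m)
    (x : EuclideanSpace ℝ (Fin m)) (hx : x ∈ closure (arrFace a b φ))
    (hcard : ({i | ⟪a i, x⟫ = b i} : Set (Fin s)).ncard = m)
    (v : EuclideanSpace ℝ (Fin m)) (hv : ∀ i, ⟪a i, x⟫ = b i → ⟪a i, v⟫ = 0) :
    v = 0 := by
  by_contra hv0
  have hcl : closure (arrFace a b φ) =
      {y | ∀ i, 0 ≤ (φ i : ℝ) * (⟪a i, y⟫ - b i)} := closure_arrFace a b φ hb.1 hb.2.1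
  set I : Set ℝ := {t : ℝ | x + t • v ∈ closure (arrFace a b φ)} with hI
  have h0I : (0 : ℝ) ∈ I := by simp [hI, hx]
  have hIc : IsClosed I :=
    (isClosed_closure).preimage (by continuity)
  -- bounded above
  obtain ⟨R, hR⟩ := (Metric.isBounded_iff_subset_closedBall 0).mp hb.2.2.closure
  have hvpos : (0:ℝ) < ‖v‖ := norm_pos_iff.mpr hv0
  have hbdd : BddAbove I := by
    refine ⟨(R + ‖x‖) / ‖v‖, fun t ht => ?_⟩
    have h1 : ‖x + t • v‖ ≤ R := by
      have := hR ht
      simpa [Metric.mem_closedBall, dist_eq_norm] using this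
    have h2 : ‖t • v‖ ≤ ‖x + t • v‖ + ‖x‖ := by
      have heq : ‖t • v‖ = ‖(x + t • v) - x‖ := by congr 1; abel
      rw [heq]
      exact norm_sub_le _ _
    have h3 : |t| * ‖v‖ ≤ R + ‖x‖ := by
      have := norm_smul t v
      rw [Real.norm_eq_abs] at this
      linarith [this ▸ h2]
    calc t ≤ |t| := le_abs_self t
      _ ≤ (R + ‖x‖) / ‖v‖ := by
          rw [le_div_iff₀ hvpos]
          exact h3
  have hinner : ∀ (i : Fin s) (t : ℝ), ⟪a i, x + t • v⟫ = ⟪a i, x⟫ + t * ⟪a i, v⟫ := by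
    intro i t
    rw [inner_add_right, real_inner_smul_right]
  set t0 := sSup I with ht0
  have ht0I : t0 ∈ I := hIc.csSup_mem ⟨0, h0I⟩ hbdd
  set z := x + t0 • v with hzdef
  have hzc : ∀ i, 0 ≤ (φ i : ℝ) * (⟪a i, z⟫ - b i) := by
    have := ht0I
    rw [hI, Set.mem_setOf_eq, hcl] at this
    exact this
  classical
  set J : Finset (Fin s) := Finset.univ.filter (fun j => ⟪a j, v⟫ ≠ 0) with hJdef
  rcases Finset.eq_empty_or_nonempty J with hJ | hJ
  · -- all inner products vanish: I is unbounded, contradiction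
    have hall : ∀ j, ⟪a j, v⟫ = 0 := by
      intro j
      by_contra hj
      have : j ∈ J := by rw [hJdef]; exact Finset.mem_filter.mpr ⟨Finset.mem_univ _, hj⟩
      rw [hJ] at this
      exact absurd this (Finset.notMem_empty j)
    have hmem : t0 + 1 ∈ I := by
      rw [hI, Set.mem_setOf_eq, hcl]
      intro i
      rw [hinner, hall, mul_zero, add_zero]
      rw [hcl] at hx
      exact hx i
    have := le_csSup hbdd hmem
    linarith
  · by_cases hex : ∃ j, ⟪a j, z⟫ = b j ∧ ¬(⟪a j, x⟫ = b j)
    · obtain ⟨j, hj1, hj2⟩ := hex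
      have hsub : insert j {i | ⟪a i, x⟫ = b i} ⊆ {i | ⟪a i, z⟫ = b i} := by
        rintro i (rfl | hi)
        · exact hj1
        · show ⟪a i, z⟫ = b i
          rw [hzdef, hinner, hv i hi, mul_zero, add_zero]
          exact hi
      have hj2' : j ∉ {i | ⟪a i, x⟫ = b i} := hj2
      have hcard2 : (insert j {i | ⟪a i, x⟫ = b i}).ncard = m + 1 := by
        rw [Set.ncard_insert_of_notMem hj2' (Set.toFinite _), hcard]
      have hle : (insert j {i | ⟪a i, x⟫ = b i}).ncard ≤
          ({i | ⟪a i, z⟫ = b i} : Set (Fin s)).ncard :=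
        Set.ncard_le_ncard hsub (Set.toFinite _)
      have := hgeneric z
      omega
    · push_neg at hex
      have hpos : ∀ j ∈ J, 0 < (φ j : ℝ) * (⟪a j, z⟫ - b j) := by
        intro j hjJ
        rcases (hzc j).lt_or_eq with h | h
        · exact h
        · exfalso
          have : ⟪a j, z⟫ = b j := by
            have := (mul_eq_zero.mp h.symm).resolve_left (signtype_coe_ne_zero (hb.1 j))
            linarith
          have hxj := hex j this
          have := hv j hxj
          rw [hJdef] at hjJ
          exact (Finset.mem_filter.mp hjJ).2 this
      set ε : ℝ := J.inf' hJ (fun j => (φ j : ℝ) * (⟪a j, z⟫ - b j) / |⟪a j, v⟫|) with hε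
      have hεpos : 0 < ε := by
        rw [hε, Finset.lt_inf'_iff]
        intro j hjJ
        have h1 := hpos j hjJ
        have h2 : (0:ℝ) < |⟪a j, v⟫| := by
          rw [hJdef] at hjJ
          simp only [Finset.mem_filter] at hjJ
          exact abs_pos.mpr hjJ.2
        positivity
      have hmem : t0 + ε ∈ I := by
        rw [hI, Set.mem_setOf_eq, hcl]
        intro j
        have hval : ⟪a j, x + (t0 + ε) • v⟫ - b j = (⟪a j, z⟫ - b j) + ε * ⟪a j, v⟫ := by
          rw [hinner, hzdef, hinner]; ring
        rw [hval, mul_add]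
        by_cases hjv : ⟪a j, v⟫ = 0
        · rw [hjv]
          simpa using hzc j
        · have hjJ : j ∈ J := by
            rw [hJdef]; exact Finset.mem_filter.mpr ⟨Finset.mem_univ _, hjv⟩
          have hle : ε ≤ (φ j : ℝ) * (⟪a j, z⟫ - b j) / |⟪a j, v⟫| :=
            Finset.inf'_le _ hjJ
          have habs : |(φ j : ℝ)| = 1 := signtype_abs_coe_one (hb.1 j)
          have h2 : (0:ℝ) < |⟪a j, v⟫| := abs_pos.mpr hjv
          have h3 : ε * |⟪a j, v⟫| ≤ (φ j : ℝ) * (⟪a j, z⟫ - b j) := by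
            rw [← le_div_iff₀ h2]
            exact hle
          have h4 : |(φ j : ℝ) * (ε * ⟪a j, v⟫)| = ε * |⟪a j, v⟫| := by
            rw [abs_mul, habs, one_mul, abs_mul, abs_of_pos hεpos]
          have h5 := neg_abs_le ((φ j : ℝ) * (ε * ⟪a j, v⟫))
          rw [h4] at h5
          have h6 : (φ j : ℝ) * (ε * ⟪a j, v⟫) = (φ j : ℝ) * ε * ⟪a j, v⟫ := by ring
          linarith [h6 ▸ h5]
      have := le_csSup hbdd hmem
      linarith

lemma euclid_inner (u w : EuclideanSpace ℝ (Fin m)) : ⟪u, w⟫ = ∑ q, u q * w q := by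
  simp [PiLp.inner_apply, RCLike.inner_apply, mul_comm]

lemma mulVec_eq_inner (S : Finset (Fin s)) (hS : S.card = m) (w : EuclideanSpace ℝ (Fin m)) :
    (Matrix.of fun p q : Fin m => a (S.orderIsoOfFin hS p) q).mulVec w
      = fun p => ⟪a (S.orderIsoOfFin hS p), w⟫ := by
  funext p
  rw [Matrix.mulVec, dotProduct, euclid_inner]
  rfl

lemma spanS_iff_det (S : Finset (Fin s)) (hS : S.card = m) :
    (∀ v : EuclideanSpace ℝ (Fin m), (∀ i ∈ S, ⟪a i, v⟫ = 0) → v = 0) ↔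
    (Matrix.of fun p q : Fin m => a (S.orderIsoOfFin hS p) q).det ≠ 0 := by
  constructor
  · intro hspan
    have hzero : ∀ w : Fin m → ℝ,
        (Matrix.of fun p q : Fin m => a (S.orderIsoOfFin hS p) q).mulVec w = 0 → w = 0 := by
      intro w hw
      rw [mulVec_eq_inner] at hw
      refine congrArg WithLp.ofLp (hspan (WithLp.toLp 2 w) fun i hi => ?_)
      have hp := congrFun hw ((S.orderIsoOfFin hS).symm ⟨i, hi⟩)
      have he : ((S.orderIsoOfFin hS) ((S.orderIsoOfFin hS).symm ⟨i, hi⟩) : Fin s) = i := by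
        rw [OrderIso.apply_symm_apply]
      rw [he] at hp
      exact hp
    have hinj : Function.Injective
        (Matrix.of fun p q : Fin m => a (S.orderIsoOfFin hS p) q).mulVec := by
      intro u w huw
      have : (Matrix.of fun p q : Fin m => a (S.orderIsoOfFin hS p) q).mulVec (u - w) = 0 := by
        rw [Matrix.mulVec_sub, huw, sub_self]
      have := hzero _ this
      rwa [sub_eq_zero] at this
    have := Matrix.mulVec_injective_iff_isUnit.mp hinj
    rw [Matrix.isUnit_iff_isUnit_det] at this
    exact this.ne_zero
  · intro hdet v hv
    have hu := (Matrix.isUnit_iff_isUnit_det _).mpr (isUnit_iff_ne_zero.mpr hdet)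
    have hinj := Matrix.mulVec_injective_iff_isUnit.mpr hu
    have h0 : (Matrix.of fun p q : Fin m => a (S.orderIsoOfFin hS p) q).mulVec v
        = (Matrix.of fun p q : Fin m => a (S.orderIsoOfFin hS p) q).mulVec 0 := by
      rw [Matrix.mulVec_zero, mulVec_eq_inner]
      funext p
      exact hv _ ((S.orderIsoOfFin hS p).2)
    exact congrArg (WithLp.toLp 2) (hinj h0)

/-- Uniqueness of the common solution point. -/
lemma vertex_unique {b : Fin s → ℝ} (S : Finset (Fin s))
    (hspan : ∀ v : EuclideanSpace ℝ (Fin m), (∀ i ∈ S, ⟪a i, v⟫ = 0) → v = 0)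
    (x y : EuclideanSpace ℝ (Fin m)) (hx : ∀ i ∈ S, ⟪a i, x⟫ = b i)
    (hy : ∀ i ∈ S, ⟪a i, y⟫ = b i) : x = y := by
  have := hspan (x - y) fun i hi => by
    rw [inner_sub_right, hx i hi, hy i hi, sub_self]
  rwa [sub_eq_zero] at this

/-- Dual vectors. -/
lemma exists_dual (S : Finset (Fin s)) (hS : S.card = m)
    (hdet : (Matrix.of fun p q : Fin m => a (S.orderIsoOfFin hS p) q).det ≠ 0)
    (u : Fin s → ℝ) :
    ∃ w : EuclideanSpace ℝ (Fin m), ∀ i ∈ S, ⟪a i, w⟫ = u i := by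
  have hu := (Matrix.isUnit_iff_isUnit_det _).mpr (isUnit_iff_ne_zero.mpr hdet)
  have hsurj := Matrix.mulVec_surjective_iff_isUnit.mpr hu
  obtain ⟨w, hw⟩ := hsurj (fun p => u (S.orderIsoOfFin hS p))
  refine ⟨WithLp.toLp 2 w, fun i hi => ?_⟩
  rw [mulVec_eq_inner] at hw
  have hp := congrFun hw ((S.orderIsoOfFin hS).symm ⟨i, hi⟩)
  have he : ((S.orderIsoOfFin hS) ((S.orderIsoOfFin hS).symm ⟨i, hi⟩) : Fin s) = i := by
    rw [OrderIso.apply_symm_apply]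
  rw [he] at hp
  exact hp


lemma signtype_mul_self {u : SignType} (hu : u ≠ 0) : (u : ℝ) * (u : ℝ) = 1 := by
  rcases u with _|_|_ <;> simp_all

lemma signtype_neg_of_ne' {u v : SignType} (hu : u ≠ 0) (hv : v ≠ 0) (huv : u ≠ v) :
    (v : ℝ) = -(u : ℝ) := by
  rcases u with _|_|_ <;> rcases v with _|_|_ <;> simp_all

lemma det_phi_row (φ : Fin s → SignType) (S : Finset (Fin s)) (hS : S.card = m) :
    (Matrix.of fun p q : Fin m =>
        ((φ (S.orderIsoOfFin hS p) : ℝ) • a (S.orderIsoOfFin hS p)) q).det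
      = (∏ p, (φ (S.orderIsoOfFin hS p) : ℝ)) *
        (Matrix.of fun p q : Fin m => a (S.orderIsoOfFin hS p) q).det := by
  have h : (Matrix.of fun p q : Fin m =>
        ((φ (S.orderIsoOfFin hS p) : ℝ) • a (S.orderIsoOfFin hS p)) q)
      = Matrix.of fun p q : Fin m => (φ (S.orderIsoOfFin hS p) : ℝ) *
        (Matrix.of fun p q : Fin m => a (S.orderIsoOfFin hS p) q) p q := rfl
  rw [h, Matrix.det_mul_column]

lemma realSign_mul (x y : ℝ) :
    ((SignType.sign (x * y) : ℤ) : ℝ)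
      = ((SignType.sign x : ℤ) : ℝ) * ((SignType.sign y : ℤ) : ℝ) := by
  rw [sign_mul]
  push_cast
  ring

lemma realSign_of_unit {t : ℝ} (ht : t * t = 1) : ((SignType.sign t : ℤ) : ℝ) = t := by
  rcases mul_self_eq_one_iff.mp ht with rfl | rfl <;> simp

lemma prod_signs_eq (φ₁ φ₂ : Fin s → SignType) (hφ₁ : ∀ i, φ₁ i ≠ 0)
    (hφ₂ : ∀ i, φ₂ i ≠ 0) (S : Finset (Fin s)) [DecidablePred fun i => φ₁ i ≠ φ₂ i] :
    (∏ i ∈ S, ((φ₁ i : ℝ) * (φ₂ i : ℝ)))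
      = (-1 : ℝ) ^ (S.filter (fun i => φ₁ i ≠ φ₂ i)).card := by
  rw [← Finset.prod_filter_mul_prod_filter_not S (fun i => φ₁ i ≠ φ₂ i)]
  have h1 : ∏ i ∈ S.filter (fun i => φ₁ i ≠ φ₂ i), ((φ₁ i : ℝ) * (φ₂ i : ℝ))
      = (-1 : ℝ) ^ (S.filter (fun i => φ₁ i ≠ φ₂ i)).card := by
    rw [← Finset.prod_const]
    refine Finset.prod_congr rfl fun i hi => ?_
    have hne := (Finset.mem_filter.mp hi).2
    rw [signtype_neg_of_ne' (hφ₁ i) (hφ₂ i) hne]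
    have := signtype_mul_self (hφ₁ i)
    nlinarith [this]
  have h2 : ∏ i ∈ S.filter (fun i => ¬ φ₁ i ≠ φ₂ i), ((φ₁ i : ℝ) * (φ₂ i : ℝ)) = 1 := by
    refine Finset.prod_eq_one fun i hi => ?_
    have heq : φ₁ i = φ₂ i := not_not.mp (Finset.mem_filter.mp hi).2
    rw [← heq]
    exact signtype_mul_self (hφ₁ i)
  rw [h1, h2, mul_one]

/-- The product of the two signed determinants. -/
lemma sign_det_prod (φ₁ φ₂ : Fin s → SignType) (hφ₁ : ∀ i, φ₁ i ≠ 0)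
    (hφ₂ : ∀ i, φ₂ i ≠ 0) (S : Finset (Fin s)) (hS : S.card = m)
    (hdet : (Matrix.of fun p q : Fin m => a (S.orderIsoOfFin hS p) q).det ≠ 0)
    [DecidablePred fun i => φ₁ i ≠ φ₂ i] :
    ((SignType.sign (Matrix.of fun p q : Fin m =>
        ((φ₁ (S.orderIsoOfFin hS p) : ℝ) • a (S.orderIsoOfFin hS p)) q).det : ℤ) : ℝ) *
    ((SignType.sign (Matrix.of fun p q : Fin m =>
        ((φ₂ (S.orderIsoOfFin hS p) : ℝ) • a (S.orderIsoOfFin hS p)) q).det : ℤ) : ℝ)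
      = (-1 : ℝ) ^ (S.filter (fun i => φ₁ i ≠ φ₂ i)).card := by
  rw [det_phi_row, det_phi_row, realSign_mul, realSign_mul]
  have hP : ∀ (φ : Fin s → SignType), (∀ i, φ i ≠ 0) →
      (∏ p, (φ (S.orderIsoOfFin hS p) : ℝ)) * (∏ p, (φ (S.orderIsoOfFin hS p) : ℝ)) = 1 := by
    intro φ hφ
    rw [← Finset.prod_mul_distrib]
    exact Finset.prod_eq_one fun p _ => signtype_mul_self (hφ _)
  rw [realSign_of_unit (hP φ₁ hφ₁), realSign_of_unit (hP φ₂ hφ₂)]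
  have hsq : ((SignType.sign (Matrix.of fun p q : Fin m =>
      a (S.orderIsoOfFin hS p) q).det : ℤ) : ℝ) *
      ((SignType.sign (Matrix.of fun p q : Fin m => a (S.orderIsoOfFin hS p) q).det : ℤ) : ℝ)
      = 1 := by
    rcases hdet.lt_or_gt with h | h
    · rw [sign_eq_neg_one_iff.mpr h]; norm_num
    · rw [sign_eq_one_iff.mpr h]; norm_num
  have hreindex : ∀ (φ : Fin s → SignType),
      (∏ p, (φ (S.orderIsoOfFin hS p) : ℝ)) = ∏ i ∈ S, (φ i : ℝ) := by
    intro φ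
    rw [← Finset.prod_coe_sort S (fun i => (φ i : ℝ))]
    exact Fintype.prod_equiv (S.orderIsoOfFin hS).toEquiv _ _ (fun p => rfl)
  calc (∏ p, (φ₁ (S.orderIsoOfFin hS p) : ℝ)) *
        ((SignType.sign (Matrix.of fun p q : Fin m => a (S.orderIsoOfFin hS p) q).det : ℤ) : ℝ) *
        ((∏ p, (φ₂ (S.orderIsoOfFin hS p) : ℝ)) *
        ((SignType.sign (Matrix.of fun p q : Fin m => a (S.orderIsoOfFin hS p) q).det : ℤ) : ℝ))
      = (∏ p, (φ₁ (S.orderIsoOfFin hS p) : ℝ)) * (∏ p, (φ₂ (S.orderIsoOfFin hS p) : ℝ)) *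
        (((SignType.sign (Matrix.of fun p q : Fin m => a (S.orderIsoOfFin hS p) q).det : ℤ) : ℝ) *
        ((SignType.sign (Matrix.of fun p q : Fin m => a (S.orderIsoOfFin hS p) q).det : ℤ) : ℝ)) := by
        ring
    _ = (∏ i ∈ S, (φ₁ i : ℝ)) * (∏ i ∈ S, (φ₂ i : ℝ)) := by
        rw [hsq, mul_one, hreindex, hreindex]
    _ = ∏ i ∈ S, ((φ₁ i : ℝ) * (φ₂ i : ℝ)) := by rw [Finset.prod_mul_distrib]
    _ = (-1 : ℝ) ^ (S.filter (fun i => φ₁ i ≠ φ₂ i)).card :=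
        prod_signs_eq φ₁ φ₂ hφ₁ hφ₂ S


open Classical in
/-- The dimension of `σ` when it has a vertex. -/
lemma dim_sigma (φ₁ φ₂ : Fin s → SignType) (h1 : isBoundedRegion a b φ₁)
    (h2 : isBoundedRegion a b φ₂)
    (hgeneric : ∀ x : EuclideanSpace ℝ (Fin m),
      ({i | ⟪a i, x⟫ = b i} : Set (Fin s)).ncard ≤ m)
    (x : EuclideanSpace ℝ (Fin m))
    (hx : x ∈ closure (arrFace a b φ₁) ∩ closure (arrFace a b φ₂))
    (hxcard : ({i | ⟪a i, x⟫ = b i} : Set (Fin s)).ncard = m) :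
    Module.finrank ℝ
        (affineSpan ℝ (closure (arrFace a b φ₁) ∩ closure (arrFace a b φ₂))).direction
      = m - (Finset.univ.filter (fun i => φ₁ i ≠ φ₂ i)).card := by
  set σ : Set (EuclideanSpace ℝ (Fin m)) :=
    closure (arrFace a b φ₁) ∩ closure (arrFace a b φ₂) with hσdef
  set S : Finset (Fin s) := {i | ⟪a i, x⟫ = b i}.toFinset with hSdef
  have hS : S.card = m := by
    rw [hSdef, ← Set.ncard_eq_toFinset_card', hxcard]
  set D : Finset (Fin s) := Finset.univ.filter (fun i => φ₁ i ≠ φ₂ i) with hDdef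
  have hmemS : ∀ i, i ∈ S ↔ ⟪a i, x⟫ = b i := by
    intro i; rw [hSdef, Set.mem_toFinset]; rfl
  have hspan : ∀ v : EuclideanSpace ℝ (Fin m), (∀ i ∈ S, ⟪a i, v⟫ = 0) → v = 0 := by
    intro v hv
    exact span_at_vertex a b φ₁ h1 hgeneric x hx.1 hxcard v
      (fun i hi => hv i ((hmemS i).mpr hi))
  have hdetA := (spanS_iff_det a S hS).mp hspan
  have hxs := (mem_sigma_iff a b φ₁ φ₂ h1 h2 x).mp hx
  have hDsub : D ⊆ S := by
    intro i hi
    rw [hDdef, Finset.mem_filter] at hi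
    exact (hmemS i).mpr (hxs.1 i hi.2)
  have hDcard : D.card ≤ m := hS ▸ Finset.card_le_card hDsub
  -- the linear map to ℝ^D
  set L : EuclideanSpace ℝ (Fin m) →ₗ[ℝ] (↥D → ℝ) :=
    LinearMap.pi (fun i : ↥D => ((innerSL ℝ (a i.1)) : EuclideanSpace ℝ (Fin m) →ₗ[ℝ] ℝ))
    with hLdef
  have hLapply : ∀ (v : EuclideanSpace ℝ (Fin m)) (i : ↥D), L v i = ⟪a i.1, v⟫ := by
    intro v i; rfl
  have hLsurj : Function.Surjective L := by
    intro u
    obtain ⟨w, hw⟩ := exists_dual a S hS hdetA (fun i => if h : i ∈ D then u ⟨i, h⟩ else 0)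
    refine ⟨w, ?_⟩
    funext i
    rw [hLapply, hw i.1 (hDsub i.2)]
    rw [dif_pos i.2]
  set W := LinearMap.ker L with hWdef
  have hmemW : ∀ v, v ∈ W ↔ ∀ i ∈ D, ⟪a i, v⟫ = 0 := by
    intro v
    rw [hWdef, LinearMap.mem_ker]
    constructor
    · intro h i hi
      have := congrFun h ⟨i, hi⟩
      rwa [hLapply] at this
    · intro h
      funext i
      rw [hLapply]
      simpa using h i.1 i.2
  have hWrank : Module.finrank ℝ W = m - D.card := by
    have hrn := LinearMap.finrank_range_add_finrank_ker L
    rw [LinearMap.range_eq_top.mpr hLsurj] at hrn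
    rw [finrank_top] at hrn
    have h1' : Module.finrank ℝ (↥D → ℝ) = D.card := by
      rw [Module.finrank_pi]
      exact Fintype.card_coe D
    have h2' : Module.finrank ℝ (EuclideanSpace ℝ (Fin m)) = m := finrank_euclideanSpace_fin
    rw [h1'] at hrn
    rw [h2'] at hrn
    exact Nat.eq_sub_of_add_eq' hrn
  -- direction ≤ W
  have hdirle : (affineSpan ℝ σ).direction ≤ W := by
    rw [direction_affineSpan, vectorSpan_def, Submodule.span_le]
    rintro v ⟨y, hy, z, hz, rfl⟩
    rw [SetLike.mem_coe, hmemW]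
    intro i hi
    have hyD := ((mem_sigma_iff a b φ₁ φ₂ h1 h2 y).mp hy).1 i
      (by rw [hDdef, Finset.mem_filter] at hi; exact hi.2)
    have hzD := ((mem_sigma_iff a b φ₁ φ₂ h1 h2 z).mp hz).1 i
      (by rw [hDdef, Finset.mem_filter] at hi; exact hi.2)
    show ⟪a i, y - z⟫ = 0
    rw [inner_sub_right, hyD, hzD, sub_self]
  -- W ≤ direction
  -- dual vectors for i ∈ S \ D
  have hdual : ∀ i ∈ S \ D, ∃ w : EuclideanSpace ℝ (Fin m),
      (∀ j ∈ S, ⟪a j, w⟫ = if j = i then (φ₁ i : ℝ) else 0) := by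
    intro i _
    obtain ⟨w, hw⟩ := exists_dual a S hS hdetA (fun j => if j = i then (φ₁ i : ℝ) else 0)
    exact ⟨w, hw⟩
  choose! w hw using hdual
  -- each w i lies in the direction of the affine span of σ
  have hwdir : ∀ i ∈ S \ D, w i ∈ (affineSpan ℝ σ).direction := by
    intro i hi
    obtain ⟨hiS, hiD⟩ := Finset.mem_sdiff.mp hi
    -- the open region where all non-tight constraints are strict
    set U : Set (EuclideanSpace ℝ (Fin m)) :=
      ⋂ k ∈ Finset.univ \ S, {y | 0 < (φ₁ k : ℝ) * (⟪a k, y⟫ - b k)} with hUdef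
    have hUopen : IsOpen U := by
      refine isOpen_biInter_finset fun k _ => ?_
      exact isOpen_lt continuous_const
        (continuous_const.mul ((continuous_const.inner continuous_id).sub continuous_const))
    have hxU : x ∈ U := by
      rw [hUdef]
      simp only [Set.mem_iInter]
      intro k hk
      rw [Finset.mem_sdiff] at hk
      have hk' : ¬ ⟪a k, x⟫ = b k := fun h => hk.2 ((hmemS k).mpr h)
      have hge := hxs.2 k
      rcases hge.lt_or_eq with h | h
      · exact h
      · exfalso
        have := (mul_eq_zero.mp h.symm).resolve_left (signtype_coe_ne_zero (h1.1 k))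
        exact hk' (by linarith)
    -- find small t > 0 with x + t • w i ∈ U
    have hcont : Continuous fun t : ℝ => x + t • w i :=
      continuous_const.add (continuous_id.smul continuous_const)
    have hpre : IsOpen ((fun t : ℝ => x + t • w i) ⁻¹' U) := hUopen.preimage hcont
    have h0pre : (0:ℝ) ∈ (fun t : ℝ => x + t • w i) ⁻¹' U := by
      simp only [Set.mem_preimage, zero_smul, add_zero]
      exact hxU
    obtain ⟨ε, hεpos, hball⟩ := Metric.isOpen_iff.mp hpre 0 h0pre
    set t : ℝ := ε / 2 with htdef
    have htpos : 0 < t := by positivity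
    have htU : x + t • w i ∈ U := by
      apply hball
      rw [Metric.mem_ball, dist_zero_right, Real.norm_eq_abs, abs_of_pos htpos]
      rw [htdef]; linarith
    -- x + t • w i ∈ σ
    have hyσ : x + t • w i ∈ σ := by
      rw [hσdef]
      rw [mem_sigma_iff a b φ₁ φ₂ h1 h2]
      constructor
      · intro j hj
        have hjD : j ∈ D := by rw [hDdef, Finset.mem_filter]; exact ⟨Finset.mem_univ _, hj⟩
        have hjS : j ∈ S := hDsub hjD
        have hji : j ≠ i := fun h => hiD (h ▸ hjD)
        rw [inner_add_right, real_inner_smul_right, hw i hi j hjS, if_neg hji,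
          mul_zero, add_zero]
        exact hxs.1 j hj
      · intro k
        by_cases hkS : k ∈ S
        · by_cases hki : k = i
          · subst hki
            rw [inner_add_right, real_inner_smul_right, hw k hi k hkS, if_pos rfl]
            have hkx : ⟪a k, x⟫ = b k := (hmemS k).mp hkS
            rw [hkx]
            have : (φ₁ k : ℝ) * (b k + t * (φ₁ k : ℝ) - b k) = t * ((φ₁ k : ℝ) * (φ₁ k : ℝ)) := by
              ring
            rw [this, signtype_mul_self (h1.1 k), mul_one]
            exact htpos.le
          · rw [inner_add_right, real_inner_smul_right, hw i hi k hkS, if_neg hki,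
              mul_zero, add_zero]
            rw [(hmemS k).mp hkS]
            simp
        · have : x + t • w i ∈ {y : EuclideanSpace ℝ (Fin m) |
              0 < (φ₁ k : ℝ) * (⟪a k, y⟫ - b k)} := by
            have := htU
            rw [hUdef] at this
            simp only [Set.mem_iInter] at this
            exact this k (Finset.mem_sdiff.mpr ⟨Finset.mem_univ _, hkS⟩)
          exact this.le
    -- conclude w i ∈ direction
    have hxmem : x ∈ affineSpan ℝ σ := subset_affineSpan ℝ σ hx
    have hymem : x + t • w i ∈ affineSpan ℝ σ := subset_affineSpan ℝ σ hyσ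
    have hvsub := AffineSubspace.vsub_mem_direction hymem hxmem
    have hsimp : (x + t • w i) -ᵥ x = t • w i := by
      simp [vsub_eq_sub]
    rw [hsimp] at hvsub
    have := Submodule.smul_mem (affineSpan ℝ σ).direction t⁻¹ hvsub
    rwa [smul_smul, inv_mul_cancel₀ htpos.ne', one_smul] at this
  -- the w i span W
  have hWle : W ≤ (affineSpan ℝ σ).direction := by
    -- w restricted to S \ D is linearly independent
    have hwW : ∀ i ∈ S \ D, w i ∈ W := by
      intro i hi
      rw [hmemW]
      intro j hj
      have hji : j ≠ i := fun h => (Finset.mem_sdiff.mp hi).2 (h ▸ hj)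
      rw [hw i hi j (hDsub hj), if_neg hji]
    have hindep : LinearIndependent ℝ (fun i : ↥(S \ D) => w i.1) := by
      rw [Fintype.linearIndependent_iff]
      intro g hg j
      have happ := congrArg (fun v => ⟪a j.1, v⟫) hg
      simp only [inner_sum, real_inner_smul_right, inner_zero_right] at happ
      have hjS : j.1 ∈ S := (Finset.mem_sdiff.mp j.2).1
      have : ∀ i : ↥(S \ D), g i * ⟪a j.1, w i.1⟫ = if i = j then g j * (φ₁ j.1 : ℝ) else 0 := by
        intro i
        rw [hw i.1 i.2 j.1 hjS]
        by_cases h : i = j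
        · subst h
          rw [if_pos rfl, if_pos rfl]
        · have : ¬ (j.1 = i.1) := fun hh => h (Subtype.ext hh.symm)
          rw [if_neg this, mul_zero, if_neg h]
      rw [Finset.sum_congr rfl (fun i _ => this i), Finset.sum_ite_eq' Finset.univ j
        (fun i => g j * (φ₁ j.1 : ℝ)), if_pos (Finset.mem_univ _)] at happ
      have hφ := signtype_coe_ne_zero (h1.1 j.1)
      exact (mul_eq_zero.mp happ).resolve_right hφ
    have hspanW : Submodule.span ℝ (Set.range (fun i : ↥(S \ D) => w i.1)) = W := by
      apply Submodule.eq_of_le_of_finrank_le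
      · rw [Submodule.span_le]
        rintro v ⟨i, rfl⟩
        exact hwW i.1 i.2
      · rw [hWrank, finrank_span_eq_card hindep]
        rw [Fintype.card_coe, Finset.card_sdiff_of_subset hDsub, hS]
    rw [← hspanW, Submodule.span_le]
    rintro v ⟨i, rfl⟩
    exact hwdir i.1 i.2
  rw [le_antisymm hdirle hWle, hWrank]

open Classical in
/-- Part 1: the key identity. -/
lemma part_one (hgeneric : ∀ x : EuclideanSpace ℝ (Fin m),
      ({i | ⟪a i, x⟫ = b i} : Set (Fin s)).ncard ≤ m)
    (φ₁ φ₂ : Fin s → SignType) (h1 : isBoundedRegion a b φ₁)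
    (h2 : isBoundedRegion a b φ₂) :
    PhiPair a b φ₁ φ₂ =
      (-1 : ℝ) ^ m * ∑ S : Finset (Fin s), PsiChain a b φ₁ S * PsiChain a b φ₂ S := by
  set σ : Set (EuclideanSpace ℝ (Fin m)) :=
    closure (arrFace a b φ₁) ∩ closure (arrFace a b φ₂) with hσdef
  set Vx : Set (EuclideanSpace ℝ (Fin m)) :=
    {x ∈ σ | ({i | ⟪a i, x⟫ = b i} : Set (Fin s)).ncard = m} with hVdef
  set D : Finset (Fin s) := Finset.univ.filter (fun i => φ₁ i ≠ φ₂ i) with hDdef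
  set g : EuclideanSpace ℝ (Fin m) → Finset (Fin s) :=
    fun x => {i | ⟪a i, x⟫ = b i}.toFinset with hgdef
  -- basic facts about vertices
  have hvertex : ∀ x ∈ Vx, (g x).card = m ∧
      (∀ v : EuclideanSpace ℝ (Fin m), (∀ i ∈ g x, ⟪a i, v⟫ = 0) → v = 0) ∧
      D ⊆ g x := by
    intro x hx
    obtain ⟨hxσ, hxcard⟩ := hx
    have hgx : ∀ i, i ∈ g x ↔ ⟪a i, x⟫ = b i := by
      intro i; rw [hgdef, Set.mem_toFinset]; rfl
    have hcard : (g x).card = m := by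
      rw [hgdef, ← Set.ncard_eq_toFinset_card', hxcard]
    have hspan : ∀ v : EuclideanSpace ℝ (Fin m), (∀ i ∈ g x, ⟪a i, v⟫ = 0) → v = 0 := by
      intro v hv
      exact span_at_vertex a b φ₁ h1 hgeneric x hxσ.1 hxcard v
        (fun i hi => hv i ((hgx i).mpr hi))
    refine ⟨hcard, hspan, fun i hi => ?_⟩
    rw [hDdef, Finset.mem_filter] at hi
    exact (hgx i).mpr (((mem_sigma_iff a b φ₁ φ₂ h1 h2 x).mp hxσ).1 i hi.2)
  -- injectivity of g on Vx
  have hinjOn : Set.InjOn g Vx := by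
    intro x hx y hy hxy
    obtain ⟨_, hspan, _⟩ := hvertex x hx
    refine vertex_unique a (b := b) (g x) hspan x y ?_ ?_
    · intro i hi
      rw [hgdef, Set.mem_toFinset] at hi
      exact hi
    · intro i hi
      rw [hxy] at hi
      rw [hgdef, Set.mem_toFinset] at hi
      exact hi
  have hVfin : Vx.Finite :=
    Set.Finite.of_finite_image (Set.toFinite (g '' Vx)) hinjOn
  -- evaluation of terms at vertices
  have hterm : ∀ x ∈ Vx, PsiChain a b φ₁ (g x) * PsiChain a b φ₂ (g x)
      = (-1 : ℝ) ^ D.card := by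
    intro x hx
    obtain ⟨hcard, hspan, hDsub⟩ := hvertex x hx
    have hxσ := hx.1
    have hset : {i | ⟪a i, x⟫ = b i} = (↑(g x) : Set (Fin s)) := by
      rw [hgdef, Set.coe_toFinset]
    have hwit1 : ∃ y ∈ closure (arrFace a b φ₁),
        {i | ⟪a i, y⟫ = b i} = (↑(g x) : Set (Fin s)) := ⟨x, hxσ.1, hset⟩
    have hwit2 : ∃ y ∈ closure (arrFace a b φ₂),
        {i | ⟪a i, y⟫ = b i} = (↑(g x) : Set (Fin s)) := ⟨x, hxσ.2, hset⟩
    have hdet := (spanS_iff_det a (g x) hcard).mp hspan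
    have e1 : PsiChain a b φ₁ (g x) = ((SignType.sign (Matrix.det
        (Matrix.of fun p q : Fin m => ((φ₁ ((g x).orderIsoOfFin hcard p) : ℝ) •
          a ((g x).orderIsoOfFin hcard p)) q)) : ℤ) : ℝ) := by
      rw [PsiChain, dif_pos hcard, if_pos hwit1]
    have e2 : PsiChain a b φ₂ (g x) = ((SignType.sign (Matrix.det
        (Matrix.of fun p q : Fin m => ((φ₂ ((g x).orderIsoOfFin hcard p) : ℝ) •
          a ((g x).orderIsoOfFin hcard p)) q)) : ℤ) : ℝ) := by
      rw [PsiChain, dif_pos hcard, if_pos hwit2]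
    rw [e1, e2, sign_det_prod a φ₁ φ₂ h1.1 h2.1 (g x) hcard hdet]
    have hfe : (g x).filter (fun i => φ₁ i ≠ φ₂ i) = D := by
      ext i
      rw [Finset.mem_filter, hDdef, Finset.mem_filter]
      constructor
      · rintro ⟨_, h⟩
        exact ⟨Finset.mem_univ _, h⟩
      · rintro ⟨_, h⟩
        exact ⟨hDsub (by rw [hDdef, Finset.mem_filter]; exact ⟨Finset.mem_univ _, h⟩), h⟩
    rw [hfe]
  -- nonzero terms come from vertices
  have hnonzero : ∀ S : Finset (Fin s),
      PsiChain a b φ₁ S * PsiChain a b φ₂ S ≠ 0 → ∃ x ∈ Vx, g x = S := by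
    intro S hne
    by_cases hS : S.card = m
    · have hne1 : PsiChain a b φ₁ S ≠ 0 := fun h => hne (by rw [h, zero_mul])
      have hne2 : PsiChain a b φ₂ S ≠ 0 := fun h => hne (by rw [h, mul_zero])
      have hwit1 : ∃ y ∈ closure (arrFace a b φ₁),
          {i | ⟪a i, y⟫ = b i} = (↑S : Set (Fin s)) := by
        by_contra hw
        exact hne1 (by rw [PsiChain, dif_pos hS, if_neg hw])
      have hwit2 : ∃ y ∈ closure (arrFace a b φ₂),
          {i | ⟪a i, y⟫ = b i} = (↑S : Set (Fin s)) := by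
        by_contra hw
        exact hne2 (by rw [PsiChain, dif_pos hS, if_neg hw])
      have hdet : (Matrix.of fun p q : Fin m => a (S.orderIsoOfFin hS p) q).det ≠ 0 := by
        intro hd
        apply hne1
        rw [PsiChain, dif_pos hS, if_pos hwit1, det_phi_row a φ₁ S hS, hd, mul_zero]
        simp
      have hspan := (spanS_iff_det a S hS).mpr hdet
      obtain ⟨x₁, hx₁, hset₁⟩ := hwit1
      obtain ⟨x₂, hx₂, hset₂⟩ := hwit2
      have heq : x₁ = x₂ := by
        refine vertex_unique a (b := b) S hspan x₁ x₂ ?_ ?_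
        · intro i hi
          have : i ∈ {j | ⟪a j, x₁⟫ = b j} := by rw [hset₁]; exact hi
          exact this
        · intro i hi
          have : i ∈ {j | ⟪a j, x₂⟫ = b j} := by rw [hset₂]; exact hi
          exact this
      have hxV : x₁ ∈ Vx := by
        refine ⟨⟨hx₁, heq ▸ hx₂⟩, ?_⟩
        show ({i | ⟪a i, x₁⟫ = b i} : Set (Fin s)).ncard = m
        rw [hset₁, Set.ncard_coe_finset, hS]
      refine ⟨x₁, hxV, ?_⟩
      rw [hgdef]
      have : {i | ⟪a i, x₁⟫ = b i}.toFinset = S := by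
        ext i
        rw [Set.mem_toFinset, hset₁, Finset.mem_coe]
      exact this
    · exact absurd (by rw [PsiChain, dif_neg hS, zero_mul]) hne
  -- the sum
  have hsum : ∑ S : Finset (Fin s), PsiChain a b φ₁ S * PsiChain a b φ₂ S
      = (Vx.ncard : ℝ) * (-1 : ℝ) ^ D.card := by
    set T : Finset (Finset (Fin s)) := hVfin.toFinset.image g with hTdef
    rw [← Finset.sum_subset (Finset.subset_univ T)]
    · have : ∀ S ∈ T, PsiChain a b φ₁ S * PsiChain a b φ₂ S = (-1 : ℝ) ^ D.card := by
        intro S hS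
        rw [hTdef, Finset.mem_image] at hS
        obtain ⟨x, hxT, rfl⟩ := hS
        exact hterm x (hVfin.mem_toFinset.mp hxT)
      rw [Finset.sum_congr rfl this, Finset.sum_const, nsmul_eq_mul]
      congr 1
      rw [hTdef, Finset.card_image_of_injOn (fun x hx y hy hxy =>
        hinjOn (hVfin.mem_toFinset.mp hx) (hVfin.mem_toFinset.mp hy) hxy)]
      rw [Set.ncard_eq_toFinset_card Vx hVfin]
    · intro S _ hST
      by_contra hne
      obtain ⟨x, hxV, hgx⟩ := hnonzero S hne
      exact hST (by rw [hTdef, Finset.mem_image]; exact ⟨x, hVfin.mem_toFinset.mpr hxV, hgx⟩)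
  -- conclude
  have hVsep : {x ∈ closure (arrFace a b φ₁) ∩ closure (arrFace a b φ₂) |
      ({i | ⟪a i, x⟫ = b i} : Set (Fin s)).ncard = m} = Vx := rfl
  rcases Set.eq_empty_or_nonempty Vx with hVe | ⟨x₀, hx₀⟩
  · rw [PhiPair, hVsep, hsum, hVe, Set.ncard_empty]
    push_cast
    ring
  · have hdim := dim_sigma a b φ₁ φ₂ h1 h2 hgeneric x₀ hx₀.1 hx₀.2
    have hDle : D.card ≤ m := by
      obtain ⟨hcard, _, hDsub⟩ := hvertex x₀ hx₀
      calc D.card ≤ (g x₀).card := Finset.card_le_card hDsub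
        _ = m := hcard
    rw [PhiPair, hVsep, hsum]
    rw [← hDdef] at hdim
    rw [hdim]
    have hsq : (-1 : ℝ) ^ D.card * (-1 : ℝ) ^ D.card = 1 := by
      rw [← mul_pow]
      norm_num
    have h1p : (-1:ℝ) ^ (m - D.card) * (-1:ℝ) ^ D.card = (-1:ℝ) ^ m := by
      rw [← pow_add, Nat.sub_add_cancel hDle]
    have key : (-1:ℝ) ^ (m - D.card) = (-1:ℝ) ^ m * (-1:ℝ) ^ D.card := by
      calc (-1:ℝ) ^ (m - D.card)
          = (-1:ℝ) ^ (m - D.card) * ((-1:ℝ) ^ D.card * (-1:ℝ) ^ D.card) := by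
            rw [hsq, mul_one]
        _ = ((-1:ℝ) ^ (m - D.card) * (-1:ℝ) ^ D.card) * (-1:ℝ) ^ D.card := by ring
        _ = (-1:ℝ) ^ m * (-1:ℝ) ^ D.card := by rw [h1p]
    rw [key]
    ring

/-- Part 2, abstractly: `Phi` and `Psi` arbitrary functions satisfying the part-1 identity. -/
lemma part_two_abstract (Phi : (Fin s → SignType) → (Fin s → SignType) → ℝ)
    (Psi : (Fin s → SignType) → Finset (Fin s) → ℝ)
    (B : (Fin s → SignType) → Prop)
    (hpart1 : ∀ φ₁ φ₂, B φ₁ → B φ₂ →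
      Phi φ₁ φ₂ = (-1 : ℝ) ^ m * ∑ S : Finset (Fin s), Psi φ₁ S * Psi φ₂ S)
    (hinj : ∀ c : (Fin s → SignType) → ℝ, (∀ φ, ¬ B φ → c φ = 0) →
        (∀ S : Finset (Fin s), (∑ φ : Fin s → SignType, c φ * Psi φ S) = 0) → c = 0)
    (c : (Fin s → SignType) → ℝ) (hsupp : ∀ φ, ¬ B φ → c φ = 0) (hcne : c ≠ 0) :
    (Even m → 0 < ∑ φ₁ : Fin s → SignType, ∑ φ₂ : Fin s → SignType,
        c φ₁ * c φ₂ * Phi φ₁ φ₂) ∧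
    (Odd m → (∑ φ₁ : Fin s → SignType, ∑ φ₂ : Fin s → SignType,
        c φ₁ * c φ₂ * Phi φ₁ φ₂) < 0) := by
  have hQ : ∑ φ₁ : Fin s → SignType, ∑ φ₂ : Fin s → SignType, c φ₁ * c φ₂ * Phi φ₁ φ₂
      = (-1 : ℝ) ^ m * ∑ S : Finset (Fin s),
          (∑ φ : Fin s → SignType, c φ * Psi φ S) ^ 2 := by
    calc ∑ φ₁ : Fin s → SignType, ∑ φ₂ : Fin s → SignType, c φ₁ * c φ₂ * Phi φ₁ φ₂
        = ∑ φ₁ : Fin s → SignType, ∑ φ₂ : Fin s → SignType,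
            c φ₁ * c φ₂ * ((-1 : ℝ) ^ m * ∑ S : Finset (Fin s), Psi φ₁ S * Psi φ₂ S) := by
          refine Finset.sum_congr rfl fun φ₁ _ => Finset.sum_congr rfl fun φ₂ _ => ?_
          by_cases hb1 : B φ₁
          · by_cases hb2 : B φ₂
            · rw [hpart1 φ₁ φ₂ hb1 hb2]
            · rw [hsupp φ₂ hb2]; ring
          · rw [hsupp φ₁ hb1]; ring
      _ = ∑ φ₁ : Fin s → SignType, ∑ φ₂ : Fin s → SignType, ∑ S : Finset (Fin s),
            (-1 : ℝ) ^ m * ((c φ₁ * Psi φ₁ S) * (c φ₂ * Psi φ₂ S)) := by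
          refine Finset.sum_congr rfl fun φ₁ _ => Finset.sum_congr rfl fun φ₂ _ => ?_
          rw [Finset.mul_sum, Finset.mul_sum]
          exact Finset.sum_congr rfl fun S _ => by ring
      _ = ∑ φ₁ : Fin s → SignType, ∑ S : Finset (Fin s), ∑ φ₂ : Fin s → SignType,
            (-1 : ℝ) ^ m * ((c φ₁ * Psi φ₁ S) * (c φ₂ * Psi φ₂ S)) :=
          Finset.sum_congr rfl fun φ₁ _ => Finset.sum_comm
      _ = ∑ S : Finset (Fin s), ∑ φ₁ : Fin s → SignType, ∑ φ₂ : Fin s → SignType,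
            (-1 : ℝ) ^ m * ((c φ₁ * Psi φ₁ S) * (c φ₂ * Psi φ₂ S)) := Finset.sum_comm
      _ = (-1 : ℝ) ^ m * ∑ S : Finset (Fin s),
            (∑ φ : Fin s → SignType, c φ * Psi φ S) ^ 2 := by
          rw [Finset.mul_sum]
          refine Finset.sum_congr rfl fun S _ => ?_
          rw [sq, Finset.sum_mul_sum, Finset.mul_sum]
          exact Finset.sum_congr rfl fun φ₁ _ => by rw [Finset.mul_sum]
  have hsos : 0 ≤ ∑ S : Finset (Fin s), (∑ φ : Fin s → SignType, c φ * Psi φ S) ^ 2 :=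
    Finset.sum_nonneg fun S _ => sq_nonneg _
  have hposs : 0 < ∑ S : Finset (Fin s), (∑ φ : Fin s → SignType, c φ * Psi φ S) ^ 2 := by
    rcases hsos.lt_or_eq with h | h
    · exact h
    · exfalso
      have hz : ∀ S : Finset (Fin s), (∑ φ : Fin s → SignType, c φ * Psi φ S) = 0 := by
        intro S
        have := (Finset.sum_eq_zero_iff_of_nonneg fun S _ => sq_nonneg
          (∑ φ : Fin s → SignType, c φ * Psi φ S)).mp h.symm S (Finset.mem_univ _)
        exact (pow_eq_zero_iff two_ne_zero).mp this
      exact hcne (hinj c hsupp hz)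
  constructor
  · intro hm
    rw [hQ, hm.neg_one_pow, one_mul]
    exact hposs
  · intro hm
    rw [hQ, hm.neg_one_pow]
    nlinarith [hposs]

end StmtTwelveAux

/-- On the free vector space `V` spanned by the top-dimensional bounded
regions of a generic arrangement in `ℝ^m` (coefficient functions `c` supported on the
bounded regions), the combinatorial pairing satisfies
`Φ(F_i, F_j) = (-1)^m ⟨Ψ(F_i), Ψ(F_j)⟩`; consequently, if the linear extension of `Ψ` is
injective on `V`, then `Φ` is positive definite when `m` is even and negative definite when
`m` is odd. -/


theorem stmt_12 (s m : ℕ) (a : Fin s → EuclideanSpace ℝ (Fin m)) (b : Fin s → ℝ)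
    (ha : ∀ i, a i ≠ 0)
    (hgeneric : ∀ x : EuclideanSpace ℝ (Fin m),
      ({i | ⟪a i, x⟫ = b i} : Set (Fin s)).ncard ≤ m) :
    (∀ φ₁ φ₂ : Fin s → SignType, isBoundedRegion a b φ₁ → isBoundedRegion a b φ₂ →
      PhiPair a b φ₁ φ₂ =
        (-1 : ℝ) ^ m * ∑ S : Finset (Fin s), PsiChain a b φ₁ S * PsiChain a b φ₂ S) ∧
    ((∀ c : (Fin s → SignType) → ℝ, (∀ φ, ¬ isBoundedRegion a b φ → c φ = 0) →
        (∀ S : Finset (Fin s), (∑ φ : Fin s → SignType, c φ * PsiChain a b φ S) = 0) →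
        c = 0) →
      ∀ c : (Fin s → SignType) → ℝ, (∀ φ, ¬ isBoundedRegion a b φ → c φ = 0) → c ≠ 0 →
        (Even m → 0 < ∑ φ₁ : Fin s → SignType, ∑ φ₂ : Fin s → SignType,
            c φ₁ * c φ₂ * PhiPair a b φ₁ φ₂) ∧
        (Odd m → (∑ φ₁ : Fin s → SignType, ∑ φ₂ : Fin s → SignType,
            c φ₁ * c φ₂ * PhiPair a b φ₁ φ₂) < 0)) := by
  constructor
  · exact fun φ₁ φ₂ h1 h2 => part_one a b hgeneric φ₁ φ₂ h1 h2
  · intro hinj c hsupp hcne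
    exact part_two_abstract (PhiPair a b) (PsiChain a b) (isBoundedRegion a b)
      (fun φ₁ φ₂ h1 h2 => part_one a b hgeneric φ₁ φ₂ h1 h2) hinj c hsupp hcne
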